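/- Let G be a graph on n ≥ 10 vertices such that for every pair of vertices u, v, there exist at least q·n² pairwise edge-disjoint paths of length at least 1 from N(u) to N(v). Then G is (q/10)-cut-dense. -/

import Mathlib

/-- A graph `G` is `p`-cut-dense if for every partition of its vertex set into two parts
`A, B`, the number of edges between `A` and `B` is at least `p·|A|·|B|`. -/
def CutDense {V : Type} (G : SimpleGraph V) (p : ℝ) : Prop :=
  ∀ A B : Set V, A ∪ B = Set.univ → Disjoint A B →
    p * (A.ncard : ℝ) * (B.ncard : ℝ) ≤
      (Set.ncard {p : V × V | p.1 ∈ A ∧ p.2 ∈ B ∧ G.Adj p.1 p.2} : ℝ)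

private lemma walk_cross {V : Type} {G : SimpleGraph V} {A : Set V} :
    ∀ {a b : V} (w : G.Walk a b), a ∈ A → b ∉ A →
      ∃ x y, x ∈ A ∧ y ∉ A ∧ s(x, y) ∈ w.edges := by
  intro a b w
  induction w with
  | nil => intro ha hb; exact absurd ha hb
  | @cons a c b hac p ih =>
    intro ha hb
    by_cases hc : c ∈ A
    · obtain ⟨x, y, hx, hy, he⟩ := ih hc hb
      exact ⟨x, y, hx, hy, List.mem_cons_of_mem _ he⟩
    · exact ⟨a, c, ha, hc, by simp⟩

private lemma first_edge {V : Type} {G : SimpleGraph V} {a b : V}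
    (w : G.Walk a b) (h : 1 ≤ w.length) : ∃ y, s(a, y) ∈ w.edges := by
  cases w with
  | nil => simp at h
  | @cons a c b h' p =>
    refine ⟨c, ?_⟩
    rw [SimpleGraph.Walk.edges_cons]
    exact List.mem_cons_self

private lemma last_edge {V : Type} {G : SimpleGraph V} {a b : V}
    (w : G.Walk a b) (h : 1 ≤ w.length) : ∃ y, s(b, y) ∈ w.edges := by
  obtain ⟨y, hy⟩ := first_edge w.reverse (by simpa using h)
  refine ⟨y, ?_⟩
  rw [SimpleGraph.Walk.edges_reverse, List.mem_reverse] at hy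
  exact hy

private lemma cut_sum {V : Type} [Fintype V] [DecidableEq V] (G : SimpleGraph V)
    [DecidableRel G.Adj] (A B : Finset V) :
    (Finset.univ.filter fun p : V × V => p.1 ∈ A ∧ p.2 ∈ B ∧ G.Adj p.1 p.2).card
      = ∑ a ∈ A, (B.filter fun b => G.Adj a b).card := by
  rw [Finset.card_eq_sum_card_fiberwise (f := Prod.fst) (t := A)
    (fun p hp => (Finset.mem_filter.mp hp).2.1)]
  refine Finset.sum_congr rfl fun a ha => ?_
  refine Finset.card_nbij' (fun p => p.2) (fun b => (a, b)) ?_ ?_ ?_ ?_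
  · intro p hp
    simp only [Finset.mem_coe, Finset.mem_filter, Finset.mem_univ, true_and] at hp ⊢
    obtain ⟨⟨h1, h2, h3⟩, h4⟩ := hp
    subst h4
    exact ⟨h2, h3⟩
  · intro b hb
    simp only [Finset.mem_coe, Finset.mem_filter, Finset.mem_univ, true_and] at hb
    simp [Finset.mem_filter, ha, hb.1, hb.2]
  · intro p hp
    simp only [Finset.mem_coe, Finset.mem_filter] at hp
    rw [← hp.2]
  · intro b hb; rfl

private lemma cut_swap {V : Type} [Fintype V] [DecidableEq V] (G : SimpleGraph V)
    [DecidableRel G.Adj] (A B : Finset V) :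
    (Finset.univ.filter fun p : V × V => p.1 ∈ A ∧ p.2 ∈ B ∧ G.Adj p.1 p.2).card
      = (Finset.univ.filter fun p : V × V => p.1 ∈ B ∧ p.2 ∈ A ∧ G.Adj p.1 p.2).card := by
  refine Finset.card_nbij' Prod.swap Prod.swap ?_ ?_ ?_ ?_ <;>
    intro p hp <;> simp_all [G.adj_comm]

set_option maxHeartbeats 1000000 in
/-- If `G` has `n ≥ 10` vertices and for every pair of vertices `u, v` there
exist at least `q·n²` pairwise edge-disjoint paths of length at least `1` from `N(u)` to
`N(v)`, then `G` is `(q/10)`-cut-dense. -/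
theorem stmt8 {V : Type} [Fintype V] (G : SimpleGraph V) (q : ℝ)
    (hn : 10 ≤ Fintype.card V)
    (hpaths : ∀ u v : V, ∃ (m : ℕ) (P : Fin m → (a : V) × (b : V) × G.Walk a b),
      q * (Fintype.card V : ℝ) ^ 2 ≤ (m : ℝ) ∧
      (∀ i : Fin m, ((P i).2.2).IsPath ∧ 1 ≤ ((P i).2.2).length ∧
        (P i).1 ∈ G.neighborSet u ∧ (P i).2.1 ∈ G.neighborSet v) ∧
      (∀ i j : Fin m, i ≠ j → List.Disjoint ((P i).2.2).edges ((P j).2.2).edges)) :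
    CutDense G (q / 10) := by
  classical
  intro A B hAB hdAB
  have hB : ∀ x, x ∈ B ↔ x ∉ A := by
    intro x
    constructor
    · intro hx hxA; exact (Set.disjoint_left.mp hdAB) hxA hx
    · intro hx
      have hx2 : x ∈ A ∪ B := hAB ▸ Set.mem_univ x
      rcases hx2 with h | h
      · exact absurd h hx
      · exact h
  set n := Fintype.card V with hn'
  set A' : Finset V := Finset.univ.filter (· ∈ A) with hA'
  set B' : Finset V := Finset.univ.filter (· ∈ B) with hB'
  have hAcoe : A = ↑A' := by ext x; simp [hA']
  have hBcoe : B = ↑B' := by ext x; simp [hB']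
  set Ecut : Finset (V × V) :=
    Finset.univ.filter (fun p => p.1 ∈ A ∧ p.2 ∈ B ∧ G.Adj p.1 p.2) with hEcut
  have hEcoe : {p : V × V | p.1 ∈ A ∧ p.2 ∈ B ∧ G.Adj p.1 p.2} = ↑Ecut := by
    ext p; simp [hEcut]
  rw [hEcoe, hAcoe, hBcoe, Set.ncard_coe_finset, Set.ncard_coe_finset, Set.ncard_coe_finset]
  rcases Finset.eq_empty_or_nonempty A' with hAe | hAne
  · rw [hAe]
    simp only [Finset.card_empty, Nat.cast_zero, mul_zero, zero_mul]
    exact Nat.cast_nonneg _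
  rcases Finset.eq_empty_or_nonempty B' with hBe | hBne
  · rw [hBe]
    simp only [Finset.card_empty, Nat.cast_zero, mul_zero, zero_mul]
    exact Nat.cast_nonneg _
  -- relate Ecut written with A', B'
  have hEcut' : Ecut = Finset.univ.filter
      (fun p : V × V => p.1 ∈ A' ∧ p.2 ∈ B' ∧ G.Adj p.1 p.2) := by
    ext p; simp [hEcut, hA', hB']
  -- sums
  have hsumA : Ecut.card = ∑ a ∈ A', (B'.filter fun b => G.Adj a b).card := by
    rw [hEcut']; exact cut_sum G A' B'
  have hsumB : Ecut.card = ∑ b ∈ B', (A'.filter fun a => G.Adj b a).card := by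
    rw [hEcut', cut_swap G A' B']; exact cut_sum G B' A'
  -- choose minimizers
  obtain ⟨u, huA, hu⟩ := A'.exists_min_image (fun x => (B'.filter fun b => G.Adj x b).card) hAne
  obtain ⟨v, hvB, hv⟩ := B'.exists_min_image (fun x => (A'.filter fun a => G.Adj x a).card) hBne
  set du := (B'.filter fun b => G.Adj u b).card with hdu'
  set dv := (A'.filter fun a => G.Adj v a).card with hdv'
  have hduE : A'.card * du ≤ Ecut.card := by
    calc A'.card * du = ∑ _a ∈ A', du := by rw [Finset.sum_const, smul_eq_mul]
    _ ≤ ∑ a ∈ A', (B'.filter fun b => G.Adj a b).card := Finset.sum_le_sum hu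
    _ = Ecut.card := hsumA.symm
  have hdvE : B'.card * dv ≤ Ecut.card := by
    calc B'.card * dv = ∑ _b ∈ B', dv := by rw [Finset.sum_const, smul_eq_mul]
    _ ≤ ∑ b ∈ B', (A'.filter fun a => G.Adj b a).card := Finset.sum_le_sum hv
    _ = Ecut.card := hsumB.symm
  -- paths
  obtain ⟨m, P, hm, hprop, hdisjP⟩ := hpaths u v
  have hf : ∀ i : Fin m, ∃ c : (V × V) ⊕ ((V × V) ⊕ (V × V)),
      (∀ x y, c = Sum.inl (x, y) →
        x ∈ A ∧ y ∈ B ∧ s(x, y) ∈ ((P i).2.2).edges) ∧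
      (∀ x y, c = Sum.inr (Sum.inl (x, y)) →
        G.Adj u x ∧ x ∈ B ∧ s(x, y) ∈ ((P i).2.2).edges) ∧
      (∀ x y, c = Sum.inr (Sum.inr (x, y)) →
        G.Adj v x ∧ x ∈ A ∧ s(x, y) ∈ ((P i).2.2).edges) := by
    intro i
    obtain ⟨-, hlen, hsu, htv⟩ := hprop i
    by_cases hs : (P i).1 ∈ A
    · by_cases ht : (P i).2.1 ∈ A
      · -- ends in A : use last edge, class 3
        obtain ⟨y, hy⟩ := last_edge ((P i).2.2) hlen
        refine ⟨Sum.inr (Sum.inr ((P i).2.1, y)), ?_, ?_, ?_⟩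
        · intro x y' h; simp at h
        · intro x y' h; simp at h
        · intro x y' h
          obtain ⟨hx, hy'⟩ : (P i).2.1 = x ∧ y = y' := by simpa using h
          subst hx; subst hy'
          exact ⟨htv, ht, hy⟩
      · -- crossing
        obtain ⟨x, y, hx, hy, he⟩ := walk_cross ((P i).2.2) hs ht
        refine ⟨Sum.inl (x, y), ?_, ?_, ?_⟩
        · intro x' y' h
          obtain ⟨hx', hy'⟩ : x = x' ∧ y = y' := by simpa using h
          subst hx'; subst hy'
          exact ⟨hx, (hB y).mpr hy, he⟩
        · intro x' y' h; simp at h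
        · intro x' y' h; simp at h
    · -- starts in B : first edge, class 2
      obtain ⟨y, hy⟩ := first_edge ((P i).2.2) hlen
      refine ⟨Sum.inr (Sum.inl ((P i).1, y)), ?_, ?_, ?_⟩
      · intro x' y' h; simp at h
      · intro x' y' h
        obtain ⟨hx', hy'⟩ : (P i).1 = x' ∧ y = y' := by simpa using h
        subst hx'; subst hy'
        exact ⟨hsu, (hB _).mpr hs, hy⟩
      · intro x' y' h; simp at h
  choose f hQ using hf
  set T : Finset ((V × V) ⊕ ((V × V) ⊕ (V × V))) :=
    Ecut.disjSum (((B'.filter fun b => G.Adj u b) ×ˢ Finset.univ).disjSum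
      ((A'.filter fun a => G.Adj v a) ×ˢ Finset.univ)) with hT
  have hmaps : ∀ i ∈ (Finset.univ : Finset (Fin m)), f i ∈ T := by
    intro i _
    rcases hc : f i with ⟨x, y⟩ | ⟨x, y⟩ | ⟨x, y⟩
    · obtain ⟨h1, h2, h3⟩ := (hQ i).1 x y hc
      have hadj : G.Adj x y := ((P i).2.2).adj_of_mem_edges h3
      simp [hT, hEcut, h1, h2, hadj]
    · obtain ⟨h1, h2, h3⟩ := (hQ i).2.1 x y hc
      simp [hT, hB', h1, h2]
    · obtain ⟨h1, h2, h3⟩ := (hQ i).2.2 x y hc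
      simp [hT, hA', h1, h2]
  have hinj : Set.InjOn f ((Finset.univ : Finset (Fin m)) : Set (Fin m)) := by
    intro i _ j _ hij
    by_contra hne
    have hd := hdisjP i j hne
    rcases hc : f i with ⟨x, y⟩ | ⟨x, y⟩ | ⟨x, y⟩
    · exact hd ((hQ i).1 x y hc).2.2 ((hQ j).1 x y (hij.symm.trans hc)).2.2
    · exact hd ((hQ i).2.1 x y hc).2.2 ((hQ j).2.1 x y (hij.symm.trans hc)).2.2
    · exact hd ((hQ i).2.2 x y hc).2.2 ((hQ j).2.2 x y (hij.symm.trans hc)).2.2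
  have hcard : m ≤ Ecut.card + (du * n + dv * n) := by
    have h := Finset.card_le_card_of_injOn f hmaps hinj
    simpa [hT, Finset.card_disjSum, Finset.card_product, hdu', hdv', hn'] using h
  -- arithmetic
  have hA1 : (1 : ℝ) ≤ (A'.card : ℝ) := by
    exact_mod_cast Nat.one_le_iff_ne_zero.mpr (Finset.card_ne_zero_of_mem huA)
  have hB1 : (1 : ℝ) ≤ (B'.card : ℝ) := by
    exact_mod_cast Nat.one_le_iff_ne_zero.mpr (Finset.card_ne_zero_of_mem hvB)
  have hABn : (A'.card : ℝ) + (B'.card : ℝ) = (n : ℝ) := by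
    have hB'' : B' = Finset.univ.filter (fun x => ¬ x ∈ A) :=
      Finset.filter_congr (fun x _ => by simp [hB x])
    have : A'.card + B'.card = n := by
      rw [hA', hB'']
      simpa using Finset.card_filter_add_card_filter_not
        (s := (Finset.univ : Finset V)) (p := (· ∈ A))
    exact_mod_cast this
  have hn10 : (10 : ℝ) ≤ (n : ℝ) := by exact_mod_cast hn
  have he0 : (0 : ℝ) ≤ (Ecut.card : ℝ) := Nat.cast_nonneg _
  have hcardR : (m : ℝ) ≤ (Ecut.card : ℝ) + ((du : ℝ) * n + (dv : ℝ) * n) := by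
    exact_mod_cast hcard
  have hduR : (A'.card : ℝ) * du ≤ (Ecut.card : ℝ) := by exact_mod_cast hduE
  have hdvR : (B'.card : ℝ) * dv ≤ (Ecut.card : ℝ) := by exact_mod_cast hdvE
  set a : ℝ := (A'.card : ℝ)
  set b : ℝ := (B'.card : ℝ)
  set e : ℝ := (Ecut.card : ℝ)
  set Du : ℝ := (du : ℝ)
  set Dv : ℝ := (dv : ℝ)
  set N : ℝ := (n : ℝ)
  have h1 : q * N ^ 2 ≤ e + Du * N + Dv * N := by
    calc q * N ^ 2 ≤ (m : ℝ) := hm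
    _ ≤ e + (Du * N + Dv * N) := hcardR
    _ = e + Du * N + Dv * N := by ring
  have hab0 : (0 : ℝ) ≤ a * b := by exact mul_nonneg (Nat.cast_nonneg _) (Nat.cast_nonneg _)
  have hab : a * b ≤ N ^ 2 / 4 := by nlinarith [sq_nonneg (a - b)]
  have h5 : q * N ^ 2 * (a * b) ≤ (e + Du * N + Dv * N) * (a * b) :=
    mul_le_mul_of_nonneg_right h1 hab0
  have hn0 : (0 : ℝ) ≤ N := by linarith
  have hb0 : (0 : ℝ) ≤ b := by linarith
  have ha0 : (0 : ℝ) ≤ a := by linarith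
  have h6 : (e + Du * N + Dv * N) * (a * b) ≤ e * (a * b) + e * N * b + e * N * a := by
    nlinarith [mul_le_mul_of_nonneg_right hduR (mul_nonneg hn0 hb0),
      mul_le_mul_of_nonneg_right hdvR (mul_nonneg hn0 ha0)]
  have h8 : e * N * b + e * N * a = e * N ^ 2 := by
    have : e * N * b + e * N * a = e * N * (a + b) := by ring
    rw [this, hABn]; ring
  have h7 : e * (a * b) + e * N * b + e * N * a ≤ (5 / 4) * e * N ^ 2 := by
    have h9 : e * (a * b) ≤ e * (N ^ 2 / 4) := mul_le_mul_of_nonneg_left hab he0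
    linarith [h8]
  have h10 : q * (a * b) * N ^ 2 ≤ ((5 / 4) * e) * N ^ 2 := by nlinarith
  have hN2 : (0 : ℝ) < N ^ 2 := by nlinarith
  have h11 : q * (a * b) ≤ (5 / 4) * e := le_of_mul_le_mul_right (by linarith) hN2
  calc q / 10 * a * b = (q * (a * b)) / 10 := by ring
  _ ≤ ((5 / 4) * e) / 10 := by linarith
  _ ≤ e := by linarith
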